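/- Let A be a non-unital C*-algebra and let φ ∈ A*_+. Let φ~ denote the norm-preserving positive extension of φ to the unitization A~, defined by φ~(a + λ1) := φ(a) + λ‖φ‖ for a ∈ A and λ ∈ ℂ. Then φ is maximally mixed (as a functional on A) if and only if φ~ is maximally mixed (as a functional on A~). -/

import Mathlib

open scoped ComplexOrder Pointwise

noncomputable section

variable (A : Type*) [CStarAlgebra A]

/-- The functional `uφu* : x ↦ φ (u * x * star u)`. -/
def conjF (u : A) (φ : A →L[ℂ] ℂ) : A →L[ℂ] ℂ :=
  φ.comp (ContinuousLinearMap.mulLeftRight ℂ A u (star u))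

/-- The weak*-closure of a set of continuous linear functionals. -/
def wsClosure (S : Set (A →L[ℂ] ℂ)) : Set (A →L[ℂ] ℂ) :=
  StrongDual.toWeakDual ⁻¹' closure (StrongDual.toWeakDual '' S)

/-- The Dixmier set `D_A(φ, V)`: the weak*-closed convex hull of `{uφu* : u ∈ V}`. -/
def DixF (V : Set A) (φ : A →L[ℂ] ℂ) : Set (A →L[ℂ] ℂ) :=
  wsClosure A (convexHull ℝ ((fun u => conjF A u φ) '' V))

/-- The Dixmier set `D_A(a, V)`: the norm-closed convex hull of `{uau* : u ∈ V}`. -/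
def DixE (V : Set A) (a : A) : Set A :=
  closure (convexHull ℝ ((fun u => u * a * star u) '' V))

/-- The Dixmier set `D_A(φ)` (conjugation by the full unitary group `U(A)`). -/
def Dix (φ : A →L[ℂ] ℂ) : Set (A →L[ℂ] ℂ) := DixF A (unitary A : Set A) φ

/-- A functional is maximally mixed if `φ ∈ D_A(ψ)` for every `ψ ∈ D_A(φ)`. -/
def MaxMixed (φ : A →L[ℂ] ℂ) : Prop := ∀ ψ ∈ Dix A φ, φ ∈ Dix A ψ

/-- Positive functionals: `φ(x*x) ≥ 0` for all `x`. -/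
def IsPos (φ : A →L[ℂ] ℂ) : Prop := ∀ x : A, 0 ≤ φ (star x * x)

/-- States: positive functionals with `φ(1) = 1`. -/
def IsState (φ : A →L[ℂ] ℂ) : Prop := IsPos A φ ∧ φ 1 = 1

/-- Tracial functionals: `φ(xy) = φ(yx)`. -/
def IsTracial (φ : A →L[ℂ] ℂ) : Prop := ∀ x y : A, φ (x * y) = φ (y * x)

open scoped ComplexOrder Pointwise

noncomputable section

variable (B : Type*) [NonUnitalCStarAlgebra B]

/-- `snd : Unitization ℂ B → B` as a continuous linear map. -/
def sndCLM : Unitization ℂ B →L[ℂ] B :=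
  { Unitization.sndHom ℂ ℂ B with
    cont := continuous_snd.comp Unitization.uniformEquivProd.continuous }

/-- `inr : B → Unitization ℂ B` as a continuous linear map. -/
def inrCLM : B →L[ℂ] Unitization ℂ B :=
  { Unitization.inrHom ℂ ℂ B with cont := Unitization.continuous_inr }

/-- The functional `uφv : x ↦ φ (u * x * v)` on `B`, for `u, v` in the minimal
unitization `B~ := Unitization ℂ B`.  The product `u * x * v` is computed in `B~`;
it lies in (the canonical image of) the ideal `B` there, and is evaluated by `φ`
via the projection `snd` onto `B`. -/
def conj2 (u v : Unitization ℂ B) (φ : B →L[ℂ] ℂ) : B →L[ℂ] ℂ :=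
  ((φ.comp (sndCLM B)).comp
    (ContinuousLinearMap.mulLeftRight ℂ (Unitization ℂ B) u v)).comp (inrCLM B)

/-- The weak*-closure of a set of continuous linear functionals. -/
def wsClosureNU (S : Set (B →L[ℂ] ℂ)) : Set (B →L[ℂ] ℂ) :=
  StrongDual.toWeakDual ⁻¹' closure (StrongDual.toWeakDual '' S)

/-- The Dixmier set `D_B(φ)` of a functional: the weak*-closed convex hull of the set
`{uφu* : u ∈ U(B~)}` of conjugates of `φ` by unitaries of the minimal unitization. -/
def DixNU (φ : B →L[ℂ] ℂ) : Set (B →L[ℂ] ℂ) :=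
  wsClosureNU B (convexHull ℝ
    ((fun u : Unitization ℂ B => conj2 B u (star u) φ) ''
      (unitary (Unitization ℂ B) : Set (Unitization ℂ B))))

/-- A functional is maximally mixed if `φ ∈ D_B(ψ)` for every `ψ ∈ D_B(φ)`. -/
def MaxMixedNU (φ : B →L[ℂ] ℂ) : Prop := ∀ ψ ∈ DixNU B φ, φ ∈ DixNU B ψ

/-- Positive functionals: `φ(x*x) ≥ 0` for all `x`. -/
def IsPosNU (φ : B →L[ℂ] ℂ) : Prop := ∀ x : B, 0 ≤ φ (star x * x)

/-- `fst : Unitization ℂ B → ℂ` as a continuous linear map. -/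
def fstCLM (B : Type*) [NonUnitalCStarAlgebra B] : Unitization ℂ B →L[ℂ] ℂ :=
  { toFun := fun x => x.fst
    map_add' := fun _ _ => rfl
    map_smul' := fun _ _ => rfl
    cont := continuous_fst.comp Unitization.uniformEquivProd.continuous }

/-- The norm-preserving positive extension `φ~` of `φ` to the unitization:
`φ~(a + λ1) = φ(a) + λ‖φ‖`. -/
def extF (B : Type*) [NonUnitalCStarAlgebra B] (φ : B →L[ℂ] ℂ) :
    Unitization ℂ B →L[ℂ] ℂ :=
  φ.comp (sndCLM B) + ‖φ‖ • fstCLM B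

open NormedSpace

section Generic
variable {X Y : Type*} [NormedAddCommGroup X] [NormedSpace ℂ X]
  [NormedAddCommGroup Y] [NormedSpace ℂ Y]

lemma image_toWeakDual' (S : Set (X →L[ℂ] ℂ)) :
    StrongDual.toWeakDual '' S = S := by
  have h : ⇑(StrongDual.toWeakDual (E := X) (𝕜 := ℂ)) = fun x => x := rfl
  rw [h]
  exact Set.image_id' S

lemma dix_transfer (L : (X →L[ℂ] ℂ) →ₗ[ℝ] (Y →L[ℂ] ℂ)) (v : Y →L[ℂ] ℂ)
    (hcont : Continuous (fun θ : WeakDual ℂ X =>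
      StrongDual.toWeakDual (L (StrongDual.toWeakDual.symm θ) + v)))
    {S : Set (X →L[ℂ] ℂ)} {S' : Set (Y →L[ℂ] ℂ)}
    (him : ∀ x ∈ S, L x + v ∈ S') {φ : X →L[ℂ] ℂ}
    (hφ : StrongDual.toWeakDual φ ∈ closure (StrongDual.toWeakDual '' (convexHull ℝ S))) :
    StrongDual.toWeakDual (L φ + v) ∈ closure (StrongDual.toWeakDual '' (convexHull ℝ S')) := by
  rw [image_toWeakDual'] at hφ ⊢
  set F : WeakDual ℂ X → WeakDual ℂ Y := fun θ =>
    StrongDual.toWeakDual (L (StrongDual.toWeakDual.symm θ) + v) with hF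
  have key : F '' (convexHull ℝ S) ⊆ convexHull ℝ S' := by
    have hsub : convexHull ℝ S ⊆ F ⁻¹' (convexHull ℝ S') := by
      apply convexHull_min
      · intro x hx
        exact subset_convexHull ℝ S' (him x hx)
      · have h1 : F ⁻¹' (convexHull ℝ S') =
            L ⁻¹' ((fun y => y + v) ⁻¹' (convexHull ℝ S')) := rfl
        change Convex ℝ (L ⁻¹' ((fun y => y + v) ⁻¹' (convexHull ℝ S')))
        simpa [add_comm] using
          ((convex_convexHull ℝ S').translate_preimage_right v).linear_preimage L
    exact Set.image_subset_iff.mpr hsub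
  have m1 : F (StrongDual.toWeakDual φ) ∈ F '' closure (convexHull ℝ S) :=
    Set.mem_image_of_mem F hφ
  have m2 : F '' closure (convexHull ℝ S) ⊆ closure (F '' (convexHull ℝ S)) :=
    image_closure_subset_closure_image hcont
  exact closure_mono key (m2 m1)

end Generic

section Main

variable {B : Type*} [NonUnitalCStarAlgebra B]

/-- restriction as an `ℝ`-linear map. -/
def Rlin : (Unitization ℂ B →L[ℂ] ℂ) →ₗ[ℝ] (B →L[ℂ] ℂ) where
  toFun θ := θ.comp (inrCLM B)
  map_add' _ _ := by ext; simp
  map_smul' _ _ := by ext; simp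

/-- extension (without constant term) as an `ℝ`-linear map. -/
def Slin : (B →L[ℂ] ℂ) →ₗ[ℝ] (Unitization ℂ B →L[ℂ] ℂ) where
  toFun ψ := ψ.comp (sndCLM B)
  map_add' _ _ := by ext; simp
  map_smul' _ _ := by ext; simp

/-- full extension with constant `c`. -/
def Ec (c : ℝ) (ψ : B →L[ℂ] ℂ) : Unitization ℂ B →L[ℂ] ℂ :=
  ψ.comp (sndCLM B) + c • fstCLM B

lemma Ec_apply (c : ℝ) (ψ : B →L[ℂ] ℂ) (x : Unitization ℂ B) :
    Ec c ψ x = ψ x.snd + (c : ℂ) * x.fst := by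
  simp [Ec, sndCLM, fstCLM]
  rfl

lemma inl_eq (r : ℂ) : (Unitization.inl r : Unitization ℂ B) = r • 1 := by
  rw [← Unitization.algebraMap_eq_inl, Algebra.algebraMap_eq_smul_one]

lemma conj_decomp {u : Unitization ℂ B} (hu : u ∈ unitary (Unitization ℂ B))
    (x : Unitization ℂ B) :
    u * x * star u = u * (x.snd : Unitization ℂ B) * star u + x.fst • 1 := by
  conv_lhs => rw [← Unitization.inl_fst_add_inr_snd_eq x]
  rw [mul_add, add_mul, inl_eq, mul_smul_comm, mul_one, smul_mul_assoc,
    Unitary.mul_star_self_of_mem hu, add_comm]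

lemma restr_conj (u : Unitization ℂ B) (θ : Unitization ℂ B →L[ℂ] ℂ) :
    (conjF (Unitization ℂ B) u θ).comp (inrCLM B) =
      conj2 B u (star u) (θ.comp (inrCLM B)) := by
  ext a
  have h0 : (u * (a : Unitization ℂ B) * star u).fst = 0 := by
    simp [Unitization.fst_mul]
  have h1 : ((((u * (a : Unitization ℂ B) * star u).snd : B) : Unitization ℂ B))
      = u * (a : Unitization ℂ B) * star u := by
    conv_rhs => rw [← Unitization.inl_fst_add_inr_snd_eq (u * (a : Unitization ℂ B) * star u)]
    rw [h0]
    simp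
  simp only [conjF, conj2, ContinuousLinearMap.comp_apply,
    ContinuousLinearMap.mulLeftRight_apply]
  show θ (u * (inrCLM B a) * star u) = θ ((((sndCLM B) (u * (inrCLM B a) * star u) : B) : Unitization ℂ B))
  have h2 : (inrCLM B a : Unitization ℂ B) = (a : Unitization ℂ B) := rfl
  have h3 : ∀ y : Unitization ℂ B, (sndCLM B) y = y.snd := fun _ => rfl
  rw [h2, h3, h1]

lemma ext_conj (c : ℝ) {u : Unitization ℂ B} (hu : u ∈ unitary (Unitization ℂ B))
    (ψ : B →L[ℂ] ℂ) :
    conjF (Unitization ℂ B) u (Ec c ψ) = Ec c (conj2 B u (star u) ψ) := by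
  ext x
  simp only [conjF, ContinuousLinearMap.comp_apply,
    ContinuousLinearMap.mulLeftRight_apply]
  rw [Ec_apply, Ec_apply]
  have hd := conj_decomp hu x
  have hsnd : (u * x * star u).snd = (u * (x.snd : Unitization ℂ B) * star u).snd := by
    rw [hd, Unitization.snd_add, Unitization.snd_smul, Unitization.snd_one, smul_zero,
      add_zero]
  have hfst : (u * x * star u).fst = x.fst := by
    rw [hd, Unitization.fst_add, Unitization.fst_smul, Unitization.fst_one, smul_eq_mul,
      mul_one]
    simp [Unitization.fst_mul]
  rw [hsnd, hfst]
  rfl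

end Main

section Main2
variable {B : Type*} [NonUnitalCStarAlgebra B]

lemma cont_R : Continuous (fun θ : WeakDual ℂ (Unitization ℂ B) =>
    StrongDual.toWeakDual ((Rlin (B := B)) (StrongDual.toWeakDual.symm θ) + 0)) := by
  apply WeakDual.continuous_of_continuous_eval
  intro a
  have h : (fun θ : WeakDual ℂ (Unitization ℂ B) =>
      (StrongDual.toWeakDual ((Rlin (B := B)) (StrongDual.toWeakDual.symm θ) + 0)) a)
      = fun θ : WeakDual ℂ (Unitization ℂ B) => θ ((a : B) : Unitization ℂ B) := by
    funext θ
    show ((StrongDual.toWeakDual.symm θ).comp (inrCLM B) + 0) a = θ ((a : B) : Unitization ℂ B)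
    simp only [ContinuousLinearMap.add_apply, ContinuousLinearMap.zero_apply, add_zero,
      ContinuousLinearMap.comp_apply]
    rfl
  rw [h]
  exact WeakDual.eval_continuous _

lemma cont_E (c : ℝ) : Continuous (fun θ : WeakDual ℂ B =>
    StrongDual.toWeakDual ((Slin (B := B)) (StrongDual.toWeakDual.symm θ) + c • fstCLM B)) := by
  apply WeakDual.continuous_of_continuous_eval
  intro x
  have h : (fun θ : WeakDual ℂ B =>
      (StrongDual.toWeakDual ((Slin (B := B)) (StrongDual.toWeakDual.symm θ) + c • fstCLM B)) x)
      = fun θ : WeakDual ℂ B => θ x.snd + (c • fstCLM B) x := by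
    funext θ
    show ((StrongDual.toWeakDual.symm θ).comp (sndCLM B) + c • fstCLM B) x
        = θ x.snd + (c • fstCLM B) x
    simp only [ContinuousLinearMap.add_apply, ContinuousLinearMap.comp_apply]
    rfl
  rw [h]
  exact (WeakDual.eval_continuous _).add continuous_const

lemma Dix_restr {ρ θ : Unitization ℂ B →L[ℂ] ℂ} (h : θ ∈ Dix (Unitization ℂ B) ρ) :
    θ.comp (inrCLM B) ∈ DixNU B (ρ.comp (inrCLM B)) := by
  simp only [Dix, DixF, wsClosure, Set.mem_preimage] at h
  simp only [DixNU, wsClosureNU, Set.mem_preimage]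
  have := dix_transfer (Rlin (B := B)) 0 cont_R
    (S := (fun u => conjF (Unitization ℂ B) u ρ) '' (unitary (Unitization ℂ B)))
    (S' := (fun u : Unitization ℂ B => conj2 B u (star u) (ρ.comp (inrCLM B))) ''
      (unitary (Unitization ℂ B)))
    (fun x hx => by
      obtain ⟨u, hu, rfl⟩ := hx
      exact ⟨u, hu, by rw [add_zero]; exact (restr_conj u ρ).symm⟩) h
  rwa [add_zero] at this

lemma Dix_ext (c : ℝ) {ρ ψ : B →L[ℂ] ℂ} (h : ψ ∈ DixNU B ρ) :
    Ec c ψ ∈ Dix (Unitization ℂ B) (Ec c ρ) := by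
  simp only [DixNU, wsClosureNU, Set.mem_preimage] at h
  simp only [Dix, DixF, wsClosure, Set.mem_preimage]
  exact dix_transfer (Slin (B := B)) (c • fstCLM B) (cont_E c)
    (S := (fun u : Unitization ℂ B => conj2 B u (star u) ρ) '' (unitary (Unitization ℂ B)))
    (S' := (fun u => conjF (Unitization ℂ B) u (Ec c ρ)) '' (unitary (Unitization ℂ B)))
    (fun x hx => by
      obtain ⟨u, hu, rfl⟩ := hx
      exact ⟨u, hu, by exact (ext_conj c hu ρ)⟩) h

lemma Dix_one {ρ θ : Unitization ℂ B →L[ℂ] ℂ} (h : θ ∈ Dix (Unitization ℂ B) ρ) :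
    θ 1 = ρ 1 := by
  simp only [Dix, DixF, wsClosure, Set.mem_preimage, image_toWeakDual'] at h
  set G : Set (Unitization ℂ B →L[ℂ] ℂ) :=
    (fun u => conjF (Unitization ℂ B) u ρ) '' (unitary (Unitization ℂ B)) with hG
  have hconv : Convex ℝ {θ' : Unitization ℂ B →L[ℂ] ℂ | θ' 1 = ρ 1} := by
    intro θ1 h1 θ2 h2 a b ha hb hab
    show (a • θ1 + b • θ2) 1 = ρ 1
    simp only [ContinuousLinearMap.add_apply, ContinuousLinearMap.smul_apply]
    rw [Set.mem_setOf_eq] at h1 h2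
    rw [h1, h2, ← add_smul, hab, one_smul]
  have hgen : G ⊆ {θ' : Unitization ℂ B →L[ℂ] ℂ | θ' 1 = ρ 1} := by
    rintro _ ⟨u, hu, rfl⟩
    show ρ (u * 1 * star u) = ρ 1
    rw [mul_one, Unitary.mul_star_self_of_mem hu]
  have hsub : convexHull ℝ G ⊆ {θ' : Unitization ℂ B →L[ℂ] ℂ | θ' 1 = ρ 1} :=
    convexHull_min hgen hconv
  have hcl : IsClosed {θ' : WeakDual ℂ (Unitization ℂ B) | θ' 1 = ρ 1} :=
    isClosed_eq (WeakDual.eval_continuous 1) continuous_const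
  exact hcl.closure_subset_iff.mpr hsub h

lemma Ec_comp_inr (c : ℝ) (ψ : B →L[ℂ] ℂ) : (Ec c ψ).comp (inrCLM B) = ψ := by
  ext a
  rw [ContinuousLinearMap.comp_apply]
  show Ec c ψ ((a : B) : Unitization ℂ B) = ψ a
  rw [Ec_apply]
  simp

lemma Ec_recon (c : ℝ) {θ : Unitization ℂ B →L[ℂ] ℂ} (h : θ 1 = (c : ℂ)) :
    Ec c (θ.comp (inrCLM B)) = θ := by
  ext x
  rw [Ec_apply]
  have : θ.comp (inrCLM B) x.snd = θ ((x.snd : B) : Unitization ℂ B) := rfl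
  rw [this, ← h]
  conv_rhs => rw [← Unitization.inl_fst_add_inr_snd_eq x]
  rw [map_add, inl_eq, map_smul, smul_eq_mul]
  ring

lemma extF_eq (φ : B →L[ℂ] ℂ) : extF B φ = Ec ‖φ‖ φ := rfl

lemma extF_one (φ : B →L[ℂ] ℂ) : extF B φ 1 = (‖φ‖ : ℂ) := by
  rw [extF_eq, Ec_apply]
  simp

end Main2


/-- Let `A` be a non-unital C*-algebra and `φ ∈ A*₊`.  Then `φ` is
maximally mixed on `A` if and only if its norm-preserving positive extension `φ~` to
the unitization `A~` is maximally mixed on `A~`. -/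
theorem stmt9 (A : Type*) [NonUnitalCStarAlgebra A]
    (hnu : ¬∃ e : A, ∀ x : A, e * x = x ∧ x * e = x)
    (φ : A →L[ℂ] ℂ) (hφ : IsPosNU A φ) :
    MaxMixedNU A φ ↔ MaxMixed (Unitization ℂ A) (extF A φ) := by
  constructor
  · intro hMM θ hθ
    have h1 : θ 1 = (‖φ‖ : ℂ) := (Dix_one hθ).trans (extF_one φ)
    have hψ : θ.comp (inrCLM A) ∈ DixNU A φ := by
      have h2 := Dix_restr hθ
      rwa [extF_eq, Ec_comp_inr] at h2
    have h3 := Dix_ext ‖φ‖ (hMM _ hψ)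
    rwa [Ec_recon ‖φ‖ h1, ← extF_eq] at h3
  · intro hMM ψ hψ
    have h1 := Dix_ext ‖φ‖ hψ
    rw [← extF_eq] at h1
    have h2 := Dix_restr (hMM _ h1)
    rwa [extF_eq, Ec_comp_inr, Ec_comp_inr] at h2
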